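/- For every fixed δ > 0, the mapping s ↦ log ρ(A_{(s,δ)}) is convex on ℝ₊ = [0,∞). -/

import Mathlib

open MeasureTheory ProbabilityTheory Filter

noncomputable section

/-- Spectral radius of a real square matrix: the largest modulus of a complex root of
its characteristic polynomial. -/
def specRad {N : ℕ} (M : Matrix (Fin N) (Fin N) ℝ) : ℝ :=
  sSup {r : ℝ | ∃ z : ℂ, (M.map (Complex.ofReal ·)).charpoly.IsRoot z ∧ r = ‖z‖}

/-- The setting of de Saporta and Yao "Tail of a linear diffusion with Markov switching":
a stationary Markov jump process `X` on `E = Fin N` (`N > 1`), with positive intensity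
function `lam`, irreducible jump kernel `q` vanishing on the diagonal, invariant probability
vector `μ` (`μ Q = 0` for the generator `Q i j = lam i * (q i j - δ_{ij})`), right-continuous
step sample paths, transition semigroup `exp(tQ)` and marginal law `μ` at every time,
together with a coefficient function `a : E → ℝ`. -/
structure MSS (N : ℕ) (Ω : Type*) [MeasurableSpace Ω] where
  hN : 1 < N
  lam : Fin N → ℝ
  hlam : ∀ i, 0 < lam i
  q : Matrix (Fin N) (Fin N) ℝ
  hq_nonneg : ∀ i j, 0 ≤ q i j
  hq_row : ∀ i, ∑ j, q i j = 1
  hq_diag : ∀ i, q i i = 0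
  hq_irred : ∀ i j, ∃ k, 1 ≤ k ∧ 0 < (q ^ k) i j
  μ : Fin N → ℝ
  hμ_pos : ∀ i, 0 < μ i
  hμ_sum : ∑ i, μ i = 1
  hμ_inv : ∀ j, ∑ i, μ i * (lam i * (q i j - if i = j then 1 else 0)) = 0
  a : Fin N → ℝ
  P : Measure Ω
  hP : IsProbabilityMeasure P
  X : ℝ → Ω → Fin N
  hX_meas : ∀ t, Measurable (X t)
  hX_rightcont : ∀ ω t, ∃ ε > 0, ∀ u ∈ Set.Ico t (t + ε), X u ω = X t ω
  hX_stationary : ∀ (h : ℝ) (n : ℕ) (ts : Fin n → ℝ) (is : Fin n → Fin N),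
      P {ω | ∀ k, X (ts k + h) ω = is k} = P {ω | ∀ k, X (ts k) ω = is k}
  hX_marginal : ∀ t i, P {ω | X t ω = i} = ENNReal.ofReal (μ i)
  hX_markov : ∀ s t : ℝ, s ≤ t → ∀ f : Fin N → ℝ,
      (P[(fun ω => f (X t ω)) | ⨆ u ∈ Set.Iic s, MeasurableSpace.comap (X u) ⊤])
        =ᵐ[P] fun ω =>
          ∑ j, (NormedSpace.exp ((t - s) •
              (Matrix.of fun i j => lam i * (q i j - if i = j then 1 else 0)))) (X s ω) j * f j

namespace MSS

variable {N : ℕ} {Ω : Type*} [MeasurableSpace Ω] (S : MSS N Ω)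

/-- `Φ(s,t) = exp ∫_s^t a(X_u) du`. -/
def Phi (s t : ℝ) (ω : Ω) : ℝ := Real.exp (∫ u in s..t, S.a (S.X u ω))

/-- The conditional law `P_i = P_μ(· | X_0 = i)`. -/
def condP (i : Fin N) : Measure Ω := S.P[|{ω | S.X 0 ω = i}]

/-- The matrix `A_{(s,δ)}` with entries `(A_{(s,δ)})_{ij} = E_i[Φ(0,δ)^s 1_{X_δ = j}]`. -/
def A (s δ : ℝ) : Matrix (Fin N) (Fin N) ℝ :=
  Matrix.of fun i j => ∫ ω in {ω | S.X δ ω = j}, (S.Phi 0 δ ω) ^ s ∂(S.condP i)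

/-- `s₁ = min {λ(i)/a(i) : i ∈ E, a(i) > 0}`. -/
def s1 : ℝ := sInf {r : ℝ | ∃ i, 0 < S.a i ∧ r = S.lam i / S.a i}

/-- The matrix `M_s` with entries `(M_s)_{ij} = q(i,j) λ(i)/(λ(i) - s a(i))`. -/
def M (s : ℝ) : Matrix (Fin N) (Fin N) ℝ :=
  Matrix.of fun i j => S.q i j * S.lam i / (S.lam i - s * S.a i)

end MSS

/-- The setting extended with a volatility function `sig : E → ℝ` and an i.i.d. standard
Gaussian sequence `(ξ_n)_{n ∈ ℤ}` independent of `X`. -/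
structure MSSN (N : ℕ) (Ω : Type*) [MeasurableSpace Ω] extends MSS N Ω where
  sig : Fin N → ℝ
  ξ : ℤ → Ω → ℝ
  hξ_meas : ∀ n, Measurable (ξ n)
  hξ_law : ∀ n, P.map (ξ n) = gaussianReal 0 1
  hξ_iid : iIndepFun (m := fun _ : ℤ => (inferInstance : MeasurableSpace ℝ)) ξ P
  hξ_indepX : Indep (⨆ n : ℤ, MeasurableSpace.comap (ξ n) inferInstance)
      (⨆ t : ℝ, MeasurableSpace.comap (X t) ⊤) P

namespace MSSN

variable {N : ℕ} {Ω : Type*} [MeasurableSpace Ω] (S : MSSN N Ω)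

/-- `V_n = ∫_{n-1}^n exp(2 ∫_u^n a(X_v) dv) σ(X_u)² du`. -/
def V (n : ℤ) (ω : Ω) : ℝ :=
  ∫ u in ((n : ℝ) - 1)..(n : ℝ),
    Real.exp (2 * ∫ v in u..(n : ℝ), S.a (S.X v ω)) * (S.sig (S.X u ω)) ^ 2

/-- `b_n = V_n^{1/2} ξ_n`. -/
def b (n : ℤ) (ω : Ω) : ℝ := Real.sqrt (S.V n ω) * S.ξ n ω

/-- `Φ_n = Φ(n-1, n)`. -/
def Phin (n : ℤ) (ω : Ω) : ℝ := S.toMSS.Phi ((n : ℝ) - 1) (n : ℝ) ω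

/-- `Π_n = Φ_1 Φ_0 ⋯ Φ_{2-n}` (with `Π_0 = 1`). -/
def Pi (n : ℕ) (ω : Ω) : ℝ := ∏ k ∈ Finset.range n, S.Phin (1 - k) ω

/-- The partial sum `R_1^n = ∑_{k=0}^{n-1} Π_k b_{1-k}` (with `R_1^0 = 0`). -/
def R1part (n : ℕ) (ω : Ω) : ℝ := ∑ k ∈ Finset.range n, S.Pi k ω * S.b (1 - k) ω

/-- `R_1 = ∑_{k=0}^∞ Φ_1 Φ_0 ⋯ Φ_{2-k} b_{1-k}`, the stationary solution at time 1. -/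
def R1 (ω : Ω) : ℝ := ∑' k : ℕ, S.Pi k ω * S.b (1 - k) ω

/-- `ν`, the law of `R_1` under `P_μ`: the stationary law of the Markov-switching
diffusion `dY_t = a(X_t) Y_t dt + σ(X_t) dW_t`. -/
def ν : Measure ℝ := S.P.map S.R1

end MSSN

/-- `m` is a median of `Z` conditionally on the event `B`:
`P(Z ≤ m | B) ≥ 1/2` and `P(Z ≥ m | B) ≥ 1/2`. -/
def IsCondMedian {Ω : Type*} [MeasurableSpace Ω] (P : Measure Ω) (B : Set Ω)
    (Z : Ω → ℝ) (m : ℝ) : Prop :=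
  1/2 ≤ P[|B] {ω | Z ω ≤ m} ∧ 1/2 ≤ P[|B] {ω | m ≤ Z ω}

attribute [local instance] Matrix.linftyOpNormedAddCommGroup Matrix.linftyOpNormedRing
  Matrix.linftyOpNormedAlgebra

namespace SRad

variable {n : ℕ}

/-- complexification -/
def toC (M : Matrix (Fin n) (Fin n) ℝ) : Matrix (Fin n) (Fin n) ℂ :=
  M.map (Complex.ofReal ·)

/-- spectral radius as ENNReal -/
def sre (M : Matrix (Fin n) (Fin n) ℝ) : ENNReal := spectralRadius ℂ (toC M)

instance : CompleteSpace (Matrix (Fin n) (Fin n) ℂ) := FiniteDimensional.complete ℂ _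

lemma isRoot_iff_spectrum (M : Matrix (Fin n) (Fin n) ℂ) (z : ℂ) :
    M.charpoly.IsRoot z ↔ z ∈ spectrum ℂ M := by
  rw [spectrum.mem_iff, Matrix.isUnit_iff_isUnit_det, isUnit_iff_ne_zero, not_ne_iff]
  have : (M.charpoly).eval z = ((Matrix.charmatrix M).map (Polynomial.evalRingHom z)).det := by
    rw [Matrix.charpoly, ← Polynomial.coe_evalRingHom, RingHom.map_det]
    rfl
  rw [Polynomial.IsRoot, this]
  congr! 2
  ext i j
  by_cases h : i = j <;>
    simp [h, Matrix.charmatrix_apply, Algebra.algebraMap_eq_smul_one, Matrix.sub_apply,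
      Matrix.smul_apply, Matrix.one_apply]

end SRad


namespace SRad

variable {n : ℕ}

lemma sre_ne_top (hn : 0 < n) (M : Matrix (Fin n) (Fin n) ℝ) : sre M ≠ ⊤ := by
  haveI : Nonempty (Fin n) := Fin.pos_iff_nonempty.mp hn
  obtain ⟨z₀, _, hz₀⟩ := spectrum.exists_nnnorm_eq_spectralRadius (toC M)
  rw [sre, ← hz₀]
  exact ENNReal.coe_ne_top

lemma specRad_eq_sre (hn : 0 < n) (M : Matrix (Fin n) (Fin n) ℝ) :
    specRad M = (sre M).toReal := by
  haveI : Nonempty (Fin n) := Fin.pos_iff_nonempty.mp hn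
  obtain ⟨z₀, hz₀mem, hz₀⟩ := spectrum.exists_nnnorm_eq_spectralRadius (toC M)
  have hgreat : IsGreatest
      {r : ℝ | ∃ z : ℂ, (M.map (Complex.ofReal ·)).charpoly.IsRoot z ∧ r = ‖z‖}
      ‖z₀‖ := by
    constructor
    · exact ⟨z₀, (isRoot_iff_spectrum _ _).mpr hz₀mem, rfl⟩
    · rintro r ⟨z, hz, rfl⟩
      have hzmem : z ∈ spectrum ℂ (toC M) := (isRoot_iff_spectrum _ _).mp hz
      have : (‖z‖₊ : ENNReal) ≤ spectralRadius ℂ (toC M) := by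
        rw [spectralRadius]
        exact le_iSup₂ (f := fun k (_ : k ∈ spectrum ℂ (toC M)) => (‖k‖₊ : ENNReal)) z hzmem
      rw [← hz₀, ENNReal.coe_le_coe] at this
      rw [← NNReal.coe_le_coe, coe_nnnorm, coe_nnnorm] at this
      exact this
  rw [specRad, hgreat.csSup_eq, sre, ← hz₀, ENNReal.coe_toReal, coe_nnnorm]

end SRad

namespace SRad

variable {n : ℕ}

lemma toC_pow (M : Matrix (Fin n) (Fin n) ℝ) (k : ℕ) : toC (M ^ k) = toC M ^ k := by
  have h : ∀ A : Matrix (Fin n) (Fin n) ℝ, toC A = Complex.ofRealHom.mapMatrix A := fun A => rfl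
  rw [h, h, map_pow]

lemma nnnorm_toC (M : Matrix (Fin n) (Fin n) ℝ) : ‖toC M‖₊ = ‖M‖₊ := by
  rw [Matrix.linfty_opNNNorm_def, Matrix.linfty_opNNNorm_def]
  congr 1
  ext i
  congr 1
  -- entry
  simp [toC, Complex.nnnorm_real]

/-- Gelfand formula for real matrices with the `L∞`-operator norm. -/
lemma tendsto_sre (M : Matrix (Fin n) (Fin n) ℝ) :
    Tendsto (fun k : ℕ => (‖M ^ k‖₊ : ENNReal) ^ (1 / k : ℝ)) atTop (nhds (sre M)) := by
  have := spectrum.pow_nnnorm_pow_one_div_tendsto_nhds_spectralRadius (toC M)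
  convert this using 3 with k
  rw [← toC_pow, nnnorm_toC]
  rfl

end SRad

/-- Hölder: `∑ f^θ g^η ≤ (∑ f)^θ (∑ g)^η` for nonneg `f g`, `θ+η=1`, `θ,η>0`. -/
lemma sum_rpow_mul_rpow_le {ι : Type*} (s : Finset ι) (f g : ι → ℝ) {θ η : ℝ}
    (hθ : 0 < θ) (hη : 0 < η) (hsum : θ + η = 1)
    (hf : ∀ i ∈ s, 0 ≤ f i) (hg : ∀ i ∈ s, 0 ≤ g i) :
    ∑ i ∈ s, f i ^ θ * g i ^ η ≤ (∑ i ∈ s, f i) ^ θ * (∑ i ∈ s, g i) ^ η := by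
  have hθ1 : θ < 1 := by linarith
  have hpq : Real.HolderConjugate (1/θ) (1/η) := by
    constructor
    · rw [one_div, inv_inv, one_div, inv_inv, inv_one]; exact hsum
    · positivity
    · positivity
  have h := Real.inner_le_Lp_mul_Lq s (fun i => f i ^ θ) (fun i => g i ^ η) hpq
  simp only [one_div (1/θ), one_div (1/η), one_div, inv_inv] at h
  calc ∑ i ∈ s, f i ^ θ * g i ^ η ≤ (∑ i ∈ s, |f i ^ θ| ^ (θ⁻¹)) ^ θ * (∑ i ∈ s, |g i ^ η| ^ (η⁻¹)) ^ η := by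
        simpa using h
    _ = (∑ i ∈ s, f i) ^ θ * (∑ i ∈ s, g i) ^ η := by
        congr 1
        · congr 1
          refine Finset.sum_congr rfl fun i hi => ?_
          rw [abs_of_nonneg (Real.rpow_nonneg (hf i hi) θ), ← Real.rpow_mul (hf i hi),
            mul_inv_cancel₀ hθ.ne', Real.rpow_one]
        · congr 1
          refine Finset.sum_congr rfl fun i hi => ?_
          rw [abs_of_nonneg (Real.rpow_nonneg (hg i hi) η), ← Real.rpow_mul (hg i hi),
            mul_inv_cancel₀ hη.ne', Real.rpow_one]

namespace SRad

variable {n : ℕ}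

lemma pow_entry_nonneg {A : Matrix (Fin n) (Fin n) ℝ} (hA : ∀ i j, 0 ≤ A i j) :
    ∀ (k : ℕ) (i j : Fin n), 0 ≤ (A ^ k) i j := by
  intro k
  induction k with
  | zero => intro i j; by_cases h : i = j <;> simp [Matrix.one_apply, h]
  | succ m ih =>
      intro i j
      rw [pow_succ, Matrix.mul_apply]
      exact Finset.sum_nonneg fun k _ => mul_nonneg (ih i k) (hA k j)

lemma pow_entry_mono {A B : Matrix (Fin n) (Fin n) ℝ} (hA : ∀ i j, 0 ≤ A i j)
    (hAB : ∀ i j, A i j ≤ B i j) :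
    ∀ (k : ℕ) (i j : Fin n), (A ^ k) i j ≤ (B ^ k) i j := by
  intro k
  induction k with
  | zero => intro i j; simp
  | succ m ih =>
      intro i j
      rw [pow_succ, pow_succ, Matrix.mul_apply, Matrix.mul_apply]
      refine Finset.sum_le_sum fun k _ => ?_
      exact mul_le_mul (ih i k) (hAB k j) (hA k j) (pow_entry_nonneg (fun i j => (hA i j).trans (hAB i j)) m i k)

lemma pow_entry_holder {A B C : Matrix (Fin n) (Fin n) ℝ} {θ η : ℝ}
    (hθ : 0 < θ) (hη : 0 < η) (hsum : θ + η = 1)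
    (hA : ∀ i j, 0 ≤ A i j) (hB : ∀ i j, 0 ≤ B i j) (hC0 : ∀ i j, 0 ≤ C i j)
    (hC : ∀ i j, C i j ≤ A i j ^ θ * B i j ^ η) :
    ∀ (k : ℕ) (i j : Fin n), (C ^ k) i j ≤ ((A ^ k) i j) ^ θ * ((B ^ k) i j) ^ η := by
  intro k
  induction k with
  | zero =>
      intro i j
      by_cases h : i = j <;> simp [Matrix.one_apply, h, Real.one_rpow,
        Real.zero_rpow hθ.ne', Real.zero_rpow hη.ne']
  | succ m ih =>
      intro i j
      rw [pow_succ, pow_succ, pow_succ, Matrix.mul_apply, Matrix.mul_apply, Matrix.mul_apply]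
      have hCm : ∀ k, (C ^ m) i k * C k j ≤
          ((A ^ m) i k * A k j) ^ θ * ((B ^ m) i k * B k j) ^ η := by
        intro k
        have hCk : 0 ≤ (A ^ m) i k ^ θ * (B ^ m) i k ^ η :=
          mul_nonneg (Real.rpow_nonneg (pow_entry_nonneg hA m i k) _)
            (Real.rpow_nonneg (pow_entry_nonneg hB m i k) _)
        calc (C ^ m) i k * C k j
            ≤ ((A ^ m) i k ^ θ * (B ^ m) i k ^ η) * (A k j ^ θ * B k j ^ η) :=
              mul_le_mul (ih i k) (hC k j) (hC0 k j) hCk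
          _ = ((A ^ m) i k * A k j) ^ θ * ((B ^ m) i k * B k j) ^ η := by
              rw [Real.mul_rpow (pow_entry_nonneg hA m i k) (hA k j),
                Real.mul_rpow (pow_entry_nonneg hB m i k) (hB k j)]
              ring
      calc ∑ k, (C ^ m) i k * C k j ≤ ∑ k, ((A ^ m) i k * A k j) ^ θ * ((B ^ m) i k * B k j) ^ η :=
            Finset.sum_le_sum fun k _ => hCm k
        _ ≤ _ := sum_rpow_mul_rpow_le _ _ _ hθ hη hsum
            (fun k _ => mul_nonneg (pow_entry_nonneg hA m i k) (hA k j))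
            (fun k _ => mul_nonneg (pow_entry_nonneg hB m i k) (hB k j))

end SRad

attribute [local instance] Matrix.linftyOpNormedAddCommGroup Matrix.linftyOpNormedRing
  Matrix.linftyOpNormedAlgebra

namespace SRad

variable {n : ℕ}

lemma row_sum_le_norm {M : Matrix (Fin n) (Fin n) ℝ} (hM : ∀ i j, 0 ≤ M i j) (i : Fin n) :
    ∑ j, M i j ≤ ‖M‖ := by
  rw [Matrix.linfty_opNorm_def]
  have h1 : ((∑ j, ‖M i j‖₊ : NNReal) : ℝ) ≤ _ :=
    NNReal.coe_le_coe.mpr (Finset.le_sup (f := fun i => ∑ j, ‖M i j‖₊) (Finset.mem_univ i))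
  refine le_trans (le_of_eq ?_) h1
  rw [NNReal.coe_sum]
  exact Finset.sum_congr rfl fun j _ => (Real.norm_of_nonneg (hM i j)).symm

lemma norm_le_of_rows {M : Matrix (Fin n) (Fin n) ℝ} {c : ℝ} (hc : 0 ≤ c)
    (h : ∀ i, ∑ j, ‖M i j‖ ≤ c) : ‖M‖ ≤ c := by
  rw [Matrix.linfty_opNorm_def]
  rw [show c = ((c.toNNReal : NNReal) : ℝ) by simp [Real.coe_toNNReal _ hc]]
  rw [NNReal.coe_le_coe]
  refine Finset.sup_le fun i _ => ?_
  rw [← NNReal.coe_le_coe, Real.coe_toNNReal _ hc, NNReal.coe_sum]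
  refine le_trans (le_of_eq ?_) (h i)
  exact Finset.sum_congr rfl fun j _ => coe_nnnorm _

lemma norm_pow_holder {A B C : Matrix (Fin n) (Fin n) ℝ} {θ η : ℝ}
    (hθ : 0 < θ) (hη : 0 < η) (hsum : θ + η = 1)
    (hA : ∀ i j, 0 ≤ A i j) (hB : ∀ i j, 0 ≤ B i j) (hC0 : ∀ i j, 0 ≤ C i j)
    (hC : ∀ i j, C i j ≤ A i j ^ θ * B i j ^ η) (k : ℕ) :
    ‖C ^ k‖ ≤ ‖A ^ k‖ ^ θ * ‖B ^ k‖ ^ η := by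
  refine norm_le_of_rows (mul_nonneg (Real.rpow_nonneg (norm_nonneg _) _)
    (Real.rpow_nonneg (norm_nonneg _) _)) fun i => ?_
  have h1 : ∑ j, ‖(C ^ k) i j‖ = ∑ j, (C ^ k) i j :=
    Finset.sum_congr rfl fun j _ => Real.norm_of_nonneg (pow_entry_nonneg hC0 k i j)
  rw [h1]
  calc ∑ j, (C ^ k) i j ≤ ∑ j, ((A ^ k) i j) ^ θ * ((B ^ k) i j) ^ η :=
        Finset.sum_le_sum fun j _ => pow_entry_holder hθ hη hsum hA hB hC0 hC k i j
    _ ≤ (∑ j, (A ^ k) i j) ^ θ * (∑ j, (B ^ k) i j) ^ η :=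
        sum_rpow_mul_rpow_le _ _ _ hθ hη hsum
          (fun j _ => pow_entry_nonneg hA k i j) (fun j _ => pow_entry_nonneg hB k i j)
    _ ≤ ‖A ^ k‖ ^ θ * ‖B ^ k‖ ^ η := by
        refine mul_le_mul (Real.rpow_le_rpow (Finset.sum_nonneg fun j _ => pow_entry_nonneg hA k i j)
            (row_sum_le_norm (pow_entry_nonneg hA k) i) hθ.le)
          (Real.rpow_le_rpow (Finset.sum_nonneg fun j _ => pow_entry_nonneg hB k i j)
            (row_sum_le_norm (pow_entry_nonneg hB k) i) hη.le)
          (Real.rpow_nonneg (Finset.sum_nonneg fun j _ => pow_entry_nonneg hB k i j) _)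
          (Real.rpow_nonneg (norm_nonneg _) _)

end SRad

namespace SRad

variable {n : ℕ}

lemma sre_le_holder {A B C : Matrix (Fin n) (Fin n) ℝ} (hn : 0 < n) {θ η : ℝ}
    (hθ : 0 < θ) (hη : 0 < η) (hsum : θ + η = 1)
    (hA : ∀ i j, 0 ≤ A i j) (hB : ∀ i j, 0 ≤ B i j) (hC0 : ∀ i j, 0 ≤ C i j)
    (hC : ∀ i j, C i j ≤ A i j ^ θ * B i j ^ η) :
    sre C ≤ sre A ^ θ * sre B ^ η := by
  have hk : ∀ k : ℕ, (‖C ^ k‖₊ : ENNReal) ^ (1 / k : ℝ) ≤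
      ((‖A ^ k‖₊ : ENNReal) ^ (1 / k : ℝ)) ^ θ * ((‖B ^ k‖₊ : ENNReal) ^ (1 / k : ℝ)) ^ η := by
    intro k
    have h1 : ‖C ^ k‖₊ ≤ ‖A ^ k‖₊ ^ θ * ‖B ^ k‖₊ ^ η := by
      rw [← NNReal.coe_le_coe, NNReal.coe_mul, NNReal.coe_rpow, NNReal.coe_rpow,
        coe_nnnorm, coe_nnnorm, coe_nnnorm]
      exact norm_pow_holder hθ hη hsum hA hB hC0 hC k
    have h2 : (‖C ^ k‖₊ : ENNReal) ≤ ((‖A ^ k‖₊ : ENNReal) ^ θ) * ((‖B ^ k‖₊ : ENNReal) ^ η) := by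
      rw [← ENNReal.coe_rpow_of_nonneg _ hθ.le, ← ENNReal.coe_rpow_of_nonneg _ hη.le,
        ← ENNReal.coe_mul, ENNReal.coe_le_coe]
      exact h1
    calc (‖C ^ k‖₊ : ENNReal) ^ (1 / k : ℝ)
        ≤ (((‖A ^ k‖₊ : ENNReal) ^ θ) * ((‖B ^ k‖₊ : ENNReal) ^ η)) ^ (1 / k : ℝ) :=
          ENNReal.rpow_le_rpow h2 (by positivity)
      _ = _ := by
          rw [ENNReal.mul_rpow_of_nonneg _ _ (by positivity), ← ENNReal.rpow_mul,
            ← ENNReal.rpow_mul, ← ENNReal.rpow_mul, ← ENNReal.rpow_mul]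
          rw [mul_comm θ (1 / k : ℝ), mul_comm η (1 / k : ℝ)]
  have hCl := tendsto_sre C
  have hAl : Tendsto (fun k : ℕ => ((‖A ^ k‖₊ : ENNReal) ^ (1 / k : ℝ)) ^ θ) atTop
      (nhds ((sre A) ^ θ)) := (ENNReal.continuous_rpow_const.tendsto _).comp (tendsto_sre A)
  have hBl : Tendsto (fun k : ℕ => ((‖B ^ k‖₊ : ENNReal) ^ (1 / k : ℝ)) ^ η) atTop
      (nhds ((sre B) ^ η)) := (ENNReal.continuous_rpow_const.tendsto _).comp (tendsto_sre B)
  have hmul : Tendsto (fun k : ℕ =>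
      ((‖A ^ k‖₊ : ENNReal) ^ (1 / k : ℝ)) ^ θ * ((‖B ^ k‖₊ : ENNReal) ^ (1 / k : ℝ)) ^ η) atTop
      (nhds ((sre A) ^ θ * (sre B) ^ η)) := by
    refine ENNReal.Tendsto.mul hAl ?_ hBl ?_
    · exact Or.inr (ENNReal.rpow_ne_top_of_nonneg hη.le (sre_ne_top hn B))
    · exact Or.inr (ENNReal.rpow_ne_top_of_nonneg hθ.le (sre_ne_top hn A))
  exact le_of_tendsto_of_tendsto' hCl hmul hk

lemma sre_mono {A B : Matrix (Fin n) (Fin n) ℝ}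
    (hA : ∀ i j, 0 ≤ A i j) (hAB : ∀ i j, A i j ≤ B i j) : sre A ≤ sre B := by
  have hk : ∀ k : ℕ, (‖A ^ k‖₊ : ENNReal) ^ (1 / k : ℝ) ≤ (‖B ^ k‖₊ : ENNReal) ^ (1 / k : ℝ) := by
    intro k
    refine ENNReal.rpow_le_rpow ?_ (by positivity)
    rw [ENNReal.coe_le_coe, ← NNReal.coe_le_coe, coe_nnnorm, coe_nnnorm]
    refine norm_le_of_rows (norm_nonneg _) fun i => ?_
    have h1 : ∑ j, ‖(A ^ k) i j‖ = ∑ j, (A ^ k) i j :=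
      Finset.sum_congr rfl fun j _ => Real.norm_of_nonneg (pow_entry_nonneg hA k i j)
    rw [h1]
    exact le_trans (Finset.sum_le_sum fun j _ => pow_entry_mono hA hAB k i j)
      (row_sum_le_norm (pow_entry_nonneg (fun i j => (hA i j).trans (hAB i j)) k) i)
  exact le_of_tendsto_of_tendsto' (tendsto_sre A) (tendsto_sre B) hk

end SRad

namespace SRad

variable {n : ℕ}

lemma stoch_pow {P : Matrix (Fin n) (Fin n) ℝ} (hrow : ∀ i, ∑ j, P i j = 1) :
    ∀ (k : ℕ) (i : Fin n), ∑ j, (P ^ k) i j = 1 := by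
  intro k
  induction k with
  | zero => intro i; simp [Matrix.one_apply]
  | succ m ih =>
      intro i
      simp only [pow_succ, Matrix.mul_apply]
      rw [Finset.sum_comm]
      calc ∑ l, ∑ j, (P ^ m) i l * P l j = ∑ l, (P ^ m) i l * ∑ j, P l j := by
            simp [Finset.mul_sum]
        _ = 1 := by simp only [hrow, mul_one]; exact ih i

lemma sre_stochastic (hn : 0 < n) {P : Matrix (Fin n) (Fin n) ℝ}
    (hP : ∀ i j, 0 ≤ P i j) (hrow : ∀ i, ∑ j, P i j = 1) : sre P = 1 := by
  haveI : Nonempty (Fin n) := Fin.pos_iff_nonempty.mp hn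
  have hnorm : ∀ k : ℕ, ‖P ^ k‖ = 1 := by
    intro k
    refine le_antisymm (norm_le_of_rows zero_le_one fun i => ?_) ?_
    · rw [show ∑ j, ‖(P ^ k) i j‖ = ∑ j, (P ^ k) i j from
        Finset.sum_congr rfl fun j _ => Real.norm_of_nonneg (pow_entry_nonneg hP k i j),
        stoch_pow hrow k i]
    · obtain ⟨i⟩ := (inferInstance : Nonempty (Fin n))
      rw [← stoch_pow hrow k i]
      exact row_sum_le_norm (pow_entry_nonneg hP k) i
  have hconst : ∀ k : ℕ, (‖P ^ k‖₊ : ENNReal) ^ (1 / k : ℝ) = 1 := by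
    intro k
    have : ‖P ^ k‖₊ = 1 := by
      ext; rw [coe_nnnorm, hnorm k, NNReal.coe_one]
    rw [this, ENNReal.coe_one, ENNReal.one_rpow]
  have := tendsto_sre P
  rw [funext hconst] at this
  exact tendsto_nhds_unique this tendsto_const_nhds

lemma sre_smul {c : ℝ} (hc : 0 ≤ c) (M : Matrix (Fin n) (Fin n) ℝ) :
    sre (c • M) = ENNReal.ofReal c * sre M := by
  have hev : ∀ᶠ k : ℕ in atTop, (‖(c • M) ^ k‖₊ : ENNReal) ^ (1 / k : ℝ)
      = ENNReal.ofReal c * (‖M ^ k‖₊ : ENNReal) ^ (1 / k : ℝ) := by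
    filter_upwards [eventually_ge_atTop 1] with k hk
    rw [smul_pow]
    have h1 : ‖(c ^ k) • (M ^ k)‖₊ = ‖c ^ k‖₊ * ‖M ^ k‖₊ := nnnorm_smul _ _
    rw [h1, ENNReal.coe_mul, ENNReal.mul_rpow_of_nonneg _ _ (by positivity)]
    congr 1
    have h2 : ‖c ^ k‖₊ = c.toNNReal ^ k := by
      ext
      rw [coe_nnnorm, Real.norm_of_nonneg (pow_nonneg hc k), NNReal.coe_pow,
        Real.coe_toNNReal _ hc]
    rw [h2, ENNReal.coe_pow, ← ENNReal.rpow_natCast (↑c.toNNReal) k, ← ENNReal.rpow_mul]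
    rw [mul_one_div, div_self (by exact_mod_cast Nat.one_le_iff_ne_zero.mp hk), ENNReal.rpow_one]
    rw [ENNReal.ofReal, ENNReal.coe_inj]
  have h2 : Tendsto (fun k : ℕ => ENNReal.ofReal c * (‖M ^ k‖₊ : ENNReal) ^ (1 / k : ℝ)) atTop
      (nhds (ENNReal.ofReal c * sre M)) :=
    ENNReal.Tendsto.const_mul (tendsto_sre M) (Or.inr ENNReal.ofReal_ne_top)
  exact tendsto_nhds_unique ((tendsto_sre (c • M)).congr' hev) h2

end SRad

namespace MSS

variable {N : ℕ} {Ω : Type*} [MeasurableSpace Ω] (S : MSS N Ω)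

/-- Joint measurability of `(u, ω) ↦ a (X u ω)`. -/
lemma measurable_aX : Measurable (fun p : ℝ × Ω => S.a (S.X p.1 p.2)) := by
  have hmeas : ∀ m : ℕ, Measurable (fun p : ℝ × Ω =>
      S.a (S.X ((⌈p.1 * (m + 1)⌉ : ℤ) / (m + 1) : ℝ) p.2)) := by
    intro m
    have h1 : Measurable (fun p : ℝ × Ω => (p.2, (⌈p.1 * (m + 1)⌉ : ℤ))) :=
      measurable_snd.prodMk ((Int.measurable_ceil).comp ((measurable_fst).mul_const _))
    have h2 : Measurable (fun q : Ω × ℤ => S.a (S.X ((q.2 : ℝ) / (m + 1) : ℝ) q.1)) := by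
      apply measurable_from_prod_countable_left
      intro k
      exact (measurable_of_countable S.a).comp (S.hX_meas ((k : ℝ) / (m + 1)))
    exact h2.comp h1
  apply measurable_of_tendsto_metrizable hmeas
  rw [tendsto_pi_nhds]
  rintro ⟨t, ω⟩
  obtain ⟨ε, hε, hX⟩ := S.hX_rightcont ω t
  apply tendsto_atTop_of_eventually_const (i₀ := ⌈1 / ε⌉₊)
  intro m hm
  have hden : (0 : ℝ) < m + 1 := by positivity
  have h1 : t ≤ (⌈t * (m + 1)⌉ : ℤ) / (m + 1 : ℝ) := by
    rw [le_div_iff₀ hden]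
    exact Int.le_ceil _
  have h2 : ((⌈t * (m + 1)⌉ : ℤ) : ℝ) / (m + 1 : ℝ) < t + ε := by
    rw [div_lt_iff₀ hden]
    have hc := Int.ceil_lt_add_one (t * (m + 1))
    have hε' : 1 ≤ ε * (m + 1) := by
      have h3 : (1 / ε) ≤ (⌈(1 / ε)⌉₊ : ℝ) := Nat.le_ceil _
      have h4 : ((⌈(1 / ε)⌉₊ : ℝ)) ≤ m := by exact_mod_cast hm
      have h5 : 1 / ε ≤ (m : ℝ) := h3.trans h4
      rw [div_le_iff₀ hε] at h5
      calc (1 : ℝ) ≤ ε * m := by linarith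
        _ ≤ ε * (m + 1) := by nlinarith
    nlinarith [Int.le_ceil (t * (m + 1 : ℝ))]
  rw [hX _ ⟨h1, h2⟩]

end MSS

namespace MSS

variable {N : ℕ} {Ω : Type*} [MeasurableSpace Ω] (S : MSS N Ω)

/-- bound for `a` -/
def Ca : ℝ := ∑ i, |S.a i|

lemma abs_a_le (x : Fin N) : |S.a x| ≤ S.Ca :=
  Finset.single_le_sum (f := fun i => |S.a i|) (fun i _ => abs_nonneg _) (Finset.mem_univ x)

lemma Ca_nonneg : 0 ≤ S.Ca := Finset.sum_nonneg fun i _ => abs_nonneg _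

lemma measurable_intA (δ : ℝ) : Measurable fun ω => ∫ u in (0:ℝ)..δ, S.a (S.X u ω) := by
  have key : ∀ c d : ℝ, Measurable fun ω => ∫ u in Set.Ioc c d, S.a (S.X u ω) := by
    intro c d
    have h1 : StronglyMeasurable (fun q : Ω × ℝ => S.a (S.X q.2 q.1)) :=
      (S.measurable_aX.comp measurable_swap).stronglyMeasurable
    exact (h1.integral_prod_right' (ν := Measure.restrict volume (Set.Ioc c d))).measurable
  exact ((key 0 δ).sub (key δ 0))

lemma measurable_Phi (δ : ℝ) : Measurable (S.Phi 0 δ) :=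
  Real.measurable_exp.comp (S.measurable_intA δ)


lemma Phi_pos (δ : ℝ) (ω : Ω) : 0 < S.Phi 0 δ ω := Real.exp_pos _

lemma abs_intA_le {δ : ℝ} (hδ : 0 ≤ δ) (ω : Ω) :
    |∫ u in (0:ℝ)..δ, S.a (S.X u ω)| ≤ S.Ca * δ := by
  have h := intervalIntegral.norm_integral_le_of_norm_le_const
    (C := S.Ca) (f := fun u => S.a (S.X u ω)) (a := 0) (b := δ) ?_
  · rw [Real.norm_eq_abs] at h
    simpa [abs_of_nonneg hδ] using h
  · intro x _
    rw [Real.norm_eq_abs]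
    exact S.abs_a_le _

lemma Phi_rpow_eq (δ : ℝ) (s : ℝ) (ω : Ω) :
    S.Phi 0 δ ω ^ s = Real.exp ((∫ u in (0:ℝ)..δ, S.a (S.X u ω)) * s) := by
  rw [Real.rpow_def_of_pos (S.Phi_pos δ ω), Phi, Real.log_exp]

lemma Phi_rpow_le {δ : ℝ} (hδ : 0 ≤ δ) (s : ℝ) (ω : Ω) :
    S.Phi 0 δ ω ^ s ≤ Real.exp (S.Ca * δ * |s|) := by
  rw [S.Phi_rpow_eq δ s ω]
  refine Real.exp_le_exp.mpr ?_
  calc (∫ u in (0:ℝ)..δ, S.a (S.X u ω)) * s ≤ |(∫ u in (0:ℝ)..δ, S.a (S.X u ω)) * s| := le_abs_self _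
    _ = |∫ u in (0:ℝ)..δ, S.a (S.X u ω)| * |s| := abs_mul _ _
    _ ≤ S.Ca * δ * |s| := mul_le_mul_of_nonneg_right (S.abs_intA_le hδ ω) (abs_nonneg _)

lemma le_Phi_rpow {δ : ℝ} (hδ : 0 ≤ δ) (s : ℝ) (ω : Ω) :
    Real.exp (-(S.Ca * δ * |s|)) ≤ S.Phi 0 δ ω ^ s := by
  rw [S.Phi_rpow_eq δ s ω]
  refine Real.exp_le_exp.mpr ?_
  have h1 : -((∫ u in (0:ℝ)..δ, S.a (S.X u ω)) * s) ≤ S.Ca * δ * |s| := by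
    calc -((∫ u in (0:ℝ)..δ, S.a (S.X u ω)) * s) ≤ |(∫ u in (0:ℝ)..δ, S.a (S.X u ω)) * s| :=
          neg_le_abs _
      _ = |∫ u in (0:ℝ)..δ, S.a (S.X u ω)| * |s| := abs_mul _ _
      _ ≤ S.Ca * δ * |s| := mul_le_mul_of_nonneg_right (S.abs_intA_le hδ ω) (abs_nonneg _)
  linarith

lemma measurable_Phi_rpow (δ s : ℝ) : Measurable fun ω => S.Phi 0 δ ω ^ s := by
  have h : (fun ω => S.Phi 0 δ ω ^ s)
      = fun ω => Real.exp ((∫ u in (0:ℝ)..δ, S.a (S.X u ω)) * s) :=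
    funext fun ω => S.Phi_rpow_eq δ s ω
  rw [h]
  exact Real.measurable_exp.comp ((S.measurable_intA δ).mul_const s)

end MSS

namespace MSS

variable {N : ℕ} {Ω : Type*} [MeasurableSpace Ω] (S : MSS N Ω)

lemma condP_prob (i : Fin N) : IsProbabilityMeasure (S.condP i) := by
  haveI := S.hP
  apply ProbabilityTheory.cond_isProbabilityMeasure
  rw [S.hX_marginal 0 i]
  exact (ENNReal.ofReal_pos.mpr (S.hμ_pos i)).ne'

/-- the transition-probability-at-`δ` matrix entries -/
def pm (δ : ℝ) : Matrix (Fin N) (Fin N) ℝ :=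
  Matrix.of fun i j => ((S.condP i) {ω | S.X δ ω = j}).toReal

lemma pm_nonneg (δ : ℝ) (i j : Fin N) : 0 ≤ S.pm δ i j := ENNReal.toReal_nonneg

lemma pm_row_sum (δ : ℝ) (i : Fin N) : ∑ j, S.pm δ i j = 1 := by
  haveI := S.condP_prob i
  have hdisj : Set.PairwiseDisjoint (Finset.univ : Finset (Fin N))
      (fun j => {ω | S.X δ ω = j}) := by
    intro j _ k _ hjk
    refine Set.disjoint_left.mpr fun ω h1 h2 => hjk ?_
    rw [← h1, ← h2]
  have hmeas : ∀ j : Fin N, MeasurableSet {ω | S.X δ ω = j} := fun j =>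
    S.hX_meas δ (MeasurableSet.singleton j)
  have hsum : ∑ j, (S.condP i) {ω | S.X δ ω = j} = 1 := by
    rw [← measure_biUnion_finset hdisj fun j _ => hmeas j]
    have : ⋃ j ∈ (Finset.univ : Finset (Fin N)), {ω | S.X δ ω = j} = Set.univ := by
      ext ω; simp
    rw [this, measure_univ]
  rw [pm]
  simp only [Matrix.of_apply]
  rw [← ENNReal.toReal_sum (fun j _ => measure_ne_top _ _), hsum, ENNReal.toReal_one]

lemma A_entry_eq (s δ : ℝ) (i j : Fin N) :
    S.A s δ i j = (∫⁻ ω, ENNReal.ofReal (S.Phi 0 δ ω ^ s)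
      ∂((S.condP i).restrict {ω | S.X δ ω = j})).toReal := by
  rw [A, Matrix.of_apply]
  exact integral_eq_lintegral_of_nonneg_ae
    (Filter.Eventually.of_forall fun ω => Real.rpow_nonneg (S.Phi_pos δ ω).le s)
    ((S.measurable_Phi_rpow δ s).aestronglyMeasurable)

lemma A_lintegral_le {s δ : ℝ} (hδ : 0 ≤ δ) (i j : Fin N) :
    (∫⁻ ω, ENNReal.ofReal (S.Phi 0 δ ω ^ s) ∂((S.condP i).restrict {ω | S.X δ ω = j}))
      ≤ ENNReal.ofReal (Real.exp (S.Ca * δ * |s|)) := by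
  haveI := S.condP_prob i
  calc ∫⁻ ω, ENNReal.ofReal (S.Phi 0 δ ω ^ s) ∂((S.condP i).restrict {ω | S.X δ ω = j})
      ≤ ∫⁻ _, ENNReal.ofReal (Real.exp (S.Ca * δ * |s|))
          ∂((S.condP i).restrict {ω | S.X δ ω = j}) :=
        lintegral_mono fun ω => ENNReal.ofReal_le_ofReal (S.Phi_rpow_le hδ s ω)
    _ = ENNReal.ofReal (Real.exp (S.Ca * δ * |s|)) *
          ((S.condP i).restrict {ω | S.X δ ω = j}) Set.univ := lintegral_const _
    _ ≤ ENNReal.ofReal (Real.exp (S.Ca * δ * |s|)) * 1 := by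
        refine mul_le_mul_right ?_ _
        rw [Measure.restrict_apply_univ]
        exact prob_le_one
    _ = _ := mul_one _

lemma A_lintegral_ne_top {s δ : ℝ} (hδ : 0 ≤ δ) (i j : Fin N) :
    (∫⁻ ω, ENNReal.ofReal (S.Phi 0 δ ω ^ s) ∂((S.condP i).restrict {ω | S.X δ ω = j})) ≠ ⊤ :=
  ((S.A_lintegral_le hδ i j).trans_lt ENNReal.ofReal_lt_top).ne

lemma A_nonneg (s δ : ℝ) (i j : Fin N) : 0 ≤ S.A s δ i j := by
  rw [S.A_entry_eq s δ i j]; exact ENNReal.toReal_nonneg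

lemma A_entry_lower {s δ : ℝ} (hδ : 0 ≤ δ) (i j : Fin N) :
    Real.exp (-(S.Ca * δ * |s|)) * S.pm δ i j ≤ S.A s δ i j := by
  haveI := S.condP_prob i
  rw [S.A_entry_eq s δ i j]
  have h1 : ENNReal.ofReal (Real.exp (-(S.Ca * δ * |s|))) * ((S.condP i) {ω | S.X δ ω = j})
      ≤ ∫⁻ ω, ENNReal.ofReal (S.Phi 0 δ ω ^ s) ∂((S.condP i).restrict {ω | S.X δ ω = j}) := by
    calc ENNReal.ofReal (Real.exp (-(S.Ca * δ * |s|))) * ((S.condP i) {ω | S.X δ ω = j})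
        = ∫⁻ _, ENNReal.ofReal (Real.exp (-(S.Ca * δ * |s|)))
            ∂((S.condP i).restrict {ω | S.X δ ω = j}) := by
          rw [lintegral_const, Measure.restrict_apply_univ]
      _ ≤ _ := lintegral_mono fun ω => ENNReal.ofReal_le_ofReal (S.le_Phi_rpow hδ s ω)
  calc Real.exp (-(S.Ca * δ * |s|)) * S.pm δ i j
      = (ENNReal.ofReal (Real.exp (-(S.Ca * δ * |s|))) *
          ((S.condP i) {ω | S.X δ ω = j})).toReal := by
        rw [ENNReal.toReal_mul, ENNReal.toReal_ofReal (Real.exp_pos _).le]; rfl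
    _ ≤ _ := ENNReal.toReal_mono (S.A_lintegral_ne_top hδ i j) h1

lemma A_entry_holder {δ : ℝ} (hδ : 0 ≤ δ) {x y θ η : ℝ} (hθ : 0 ≤ θ) (hη : 0 ≤ η)
    (hsum : θ + η = 1) (i j : Fin N) :
    S.A (θ * x + η * y) δ i j ≤ S.A x δ i j ^ θ * S.A y δ i j ^ η := by
  haveI := S.condP_prob i
  set ν := (S.condP i).restrict {ω | S.X δ ω = j} with hν
  have hpt : ∀ ω, ENNReal.ofReal (S.Phi 0 δ ω ^ (θ * x + η * y)) =
      ENNReal.ofReal (S.Phi 0 δ ω ^ x) ^ θ * ENNReal.ofReal (S.Phi 0 δ ω ^ y) ^ η := by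
    intro ω
    have hp := S.Phi_pos δ ω
    rw [Real.rpow_add hp, mul_comm θ x, mul_comm η y, Real.rpow_mul hp.le,
      Real.rpow_mul hp.le, ENNReal.ofReal_rpow_of_pos (Real.rpow_pos_of_pos hp x),
      ENNReal.ofReal_rpow_of_pos (Real.rpow_pos_of_pos hp y),
      ← ENNReal.ofReal_mul (Real.rpow_nonneg (Real.rpow_nonneg hp.le x) θ)]
  have hmeas : ∀ z : ℝ, AEMeasurable (fun ω => ENNReal.ofReal (S.Phi 0 δ ω ^ z)) ν := fun z =>
    (ENNReal.measurable_ofReal.comp (S.measurable_Phi_rpow δ z)).aemeasurable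
  have key := ENNReal.lintegral_mul_norm_pow_le (hmeas x) (hmeas y) hθ hη hsum
  have h2 : (∫⁻ ω, ENNReal.ofReal (S.Phi 0 δ ω ^ (θ * x + η * y)) ∂ν)
      ≤ (∫⁻ ω, ENNReal.ofReal (S.Phi 0 δ ω ^ x) ∂ν) ^ θ *
        (∫⁻ ω, ENNReal.ofReal (S.Phi 0 δ ω ^ y) ∂ν) ^ η := by
    calc (∫⁻ ω, ENNReal.ofReal (S.Phi 0 δ ω ^ (θ * x + η * y)) ∂ν)
        = ∫⁻ ω, ENNReal.ofReal (S.Phi 0 δ ω ^ x) ^ θ * ENNReal.ofReal (S.Phi 0 δ ω ^ y) ^ η ∂ν :=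
          lintegral_congr fun ω => hpt ω
      _ ≤ _ := key
  rw [S.A_entry_eq, S.A_entry_eq, S.A_entry_eq]
  have hne : (∫⁻ ω, ENNReal.ofReal (S.Phi 0 δ ω ^ x) ∂ν) ^ θ *
      (∫⁻ ω, ENNReal.ofReal (S.Phi 0 δ ω ^ y) ∂ν) ^ η ≠ ⊤ :=
    ENNReal.mul_ne_top (ENNReal.rpow_ne_top_of_nonneg hθ (S.A_lintegral_ne_top hδ i j))
      (ENNReal.rpow_ne_top_of_nonneg hη (S.A_lintegral_ne_top hδ i j))
  refine le_trans (ENNReal.toReal_mono hne h2) (le_of_eq ?_)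
  rw [ENNReal.toReal_mul, ← ENNReal.toReal_rpow, ← ENNReal.toReal_rpow]

end MSS


/-- **Corollary 2.** For every fixed `δ > 0`, the map `s ↦ log ρ(A_{(s,δ)})` is convex
on `[0,∞)`. -/
theorem log_specRad_convex {N : ℕ} {Ω : Type*} [MeasurableSpace Ω]
    (S : MSS N Ω) (δ : ℝ) (hδ : 0 < δ) :
    ConvexOn ℝ (Set.Ici 0) (fun s : ℝ => Real.log (specRad (S.A s δ))) := by
  have hN0 : 0 < N := Nat.lt_of_le_of_lt (Nat.zero_le 1) S.hN
  constructor
  · exact convex_Ici 0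
  intro x _ y _ θ η hθ hη hsum
  simp only [smul_eq_mul]
  rcases hθ.eq_or_lt with rfl|hθ'
  · have hη1 : η = 1 := by linarith
    subst hη1; simp
  rcases hη.eq_or_lt with rfl|hη'
  · have hθ1 : θ = 1 := by linarith
    subst hθ1; simp
  have hlow : ∀ s : ℝ, ENNReal.ofReal (Real.exp (-(S.Ca * δ * |s|))) ≤ SRad.sre (S.A s δ) := by
    intro s
    have h1 : SRad.sre ((Real.exp (-(S.Ca * δ * |s|))) • (S.pm δ)) ≤ SRad.sre (S.A s δ) := by
      refine SRad.sre_mono (fun i j => ?_) (fun i j => ?_)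
      · exact mul_nonneg (Real.exp_pos _).le (S.pm_nonneg δ i j)
      · simpa [Matrix.smul_apply, smul_eq_mul] using S.A_entry_lower hδ.le i j
    rw [SRad.sre_smul (Real.exp_pos _).le,
      SRad.sre_stochastic hN0 (S.pm_nonneg δ) (S.pm_row_sum δ), mul_one] at h1
    exact h1
  have hpos : ∀ s : ℝ, 0 < specRad (S.A s δ) := by
    intro s
    rw [SRad.specRad_eq_sre hN0]
    have h2 := ENNReal.toReal_mono (SRad.sre_ne_top hN0 _) (hlow s)
    rw [ENNReal.toReal_ofReal (Real.exp_pos _).le] at h2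
    exact lt_of_lt_of_le (Real.exp_pos _) h2
  have hking : SRad.sre (S.A (θ*x+η*y) δ) ≤ SRad.sre (S.A x δ) ^ θ * SRad.sre (S.A y δ) ^ η :=
    SRad.sre_le_holder hN0 hθ' hη' hsum (S.A_nonneg x δ) (S.A_nonneg y δ) (S.A_nonneg _ δ)
      (fun i j => S.A_entry_holder hδ.le hθ hη hsum i j)
  have hreal : specRad (S.A (θ*x+η*y) δ) ≤ specRad (S.A x δ) ^ θ * specRad (S.A y δ) ^ η := by
    rw [SRad.specRad_eq_sre hN0, SRad.specRad_eq_sre hN0, SRad.specRad_eq_sre hN0]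
    refine le_trans (ENNReal.toReal_mono ?_ hking) (le_of_eq ?_)
    · exact ENNReal.mul_ne_top (ENNReal.rpow_ne_top_of_nonneg hθ (SRad.sre_ne_top hN0 _))
        (ENNReal.rpow_ne_top_of_nonneg hη (SRad.sre_ne_top hN0 _))
    · rw [ENNReal.toReal_mul, ← ENNReal.toReal_rpow, ← ENNReal.toReal_rpow]
  calc Real.log (specRad (S.A (θ*x+η*y) δ))
      ≤ Real.log (specRad (S.A x δ) ^ θ * specRad (S.A y δ) ^ η) :=
        Real.log_le_log (hpos _) hreal
    _ = θ * Real.log (specRad (S.A x δ)) + η * Real.log (specRad (S.A y δ)) := by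
        rw [Real.log_mul (Real.rpow_pos_of_pos (hpos x) θ).ne'
          (Real.rpow_pos_of_pos (hpos y) η).ne', Real.log_rpow (hpos x), Real.log_rpow (hpos y)]
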